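/- Consider the primal averaging conditional gradient (PA-CndG) method: given x₀ = y₀ ∈ X, for each k ≥ 1 set z_{k−1} := ((k−1)/(k+1)) y_{k−1} + (2/(k+1)) x_{k−1}, let x_k ∈ argmin_{x∈X} f'(z_{k−1})(x), and let y_k ∈ X be any point with f(y_k) ≤ f((1−γ_k) y_{k−1} + γ_k x_k), where γ_k := 2/(k+1) (this covers both the stepsize α_k = 2/(k+1) and the exact line-search stepsize). Then for every k ≥ 1 and every x ∈ X, f(y_k) − f(x) ≤ (2L/(k(k+1))) Σ_{i=1}^k ‖x_i − x_{i−1}‖² ≤ 2 L D_X²/(k+1). -/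

import Mathlib

set_option maxHeartbeats 1000000

lemma grad_ineq_aux {E : Type*} [NormedAddCommGroup E] [NormedSpace ℝ E]
    {X : Set E} {f : E → ℝ} {φ : E →L[ℝ] ℝ}
    (hconv : ConvexOn ℝ X f) {a b : E} (ha : a ∈ X) (hb : b ∈ X)
    (hd : HasFDerivAt f φ a) : f a + φ (b - a) ≤ f b := by
  have hline : HasDerivAt (fun t : ℝ => f (a + t • (b - a))) (φ (b - a)) 0 := by
    have h1 : HasDerivAt (fun t : ℝ => a + t • (b - a)) (b - a) 0 := by
      simpa using ((hasDerivAt_id (0:ℝ)).smul_const (b - a)).const_add a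
    have hd' : HasFDerivAt f φ (a + (0:ℝ) • (b - a)) := by simpa using hd
    exact hd'.comp_hasDerivAt (x := (0:ℝ)) h1
  have hslope : Filter.Tendsto (slope (fun t : ℝ => f (a + t • (b - a))) 0)
      (nhdsWithin 0 (Set.Ioi 0)) (nhds (φ (b - a))) :=
    (hasDerivAt_iff_tendsto_slope.1 hline).mono_left
      (nhdsWithin_mono _ (by intro t ht; exact ne_of_gt ht))
  have hbound : ∀ᶠ t in nhdsWithin (0:ℝ) (Set.Ioi 0),
      slope (fun t : ℝ => f (a + t • (b - a))) 0 t ≤ f b - f a := by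
    filter_upwards [Ioc_mem_nhdsGT_of_mem (by norm_num : (0:ℝ) ∈ Set.Ico (0:ℝ) 1)]
      with t ht
    have ht0 : 0 < t := ht.1
    have ht1 : t ≤ 1 := ht.2
    have hcomb : a + t • (b - a) = (1 - t) • a + t • b := by module
    have hfc : f (a + t • (b - a)) ≤ (1 - t) * f a + t * f b := by
      rw [hcomb]
      exact hconv.2 ha hb (by linarith) ht0.le (by ring)
    rw [slope_def_field]
    simp only [zero_smul, add_zero, sub_zero]
    rw [div_le_iff₀ ht0]
    nlinarith
  have := le_of_tendsto hslope hbound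
  linarith

/-- Convergence of the primal averaging conditional gradient (PA-CndG)
method: with `z_{k−1} = ((k−1)/(k+1)) y_{k−1} + (2/(k+1)) x_{k−1}`,
`x_k ∈ argmin_{x∈X} f'(z_{k−1})(x)` and `f(y_k) ≤ f((1−γ_k) y_{k−1} + γ_k x_k)`,
`γ_k = 2/(k+1)`, one has for all `k ≥ 1` and `u ∈ X`:
`f(y_k) − f(u) ≤ (2L/(k(k+1))) ∑_{i=1}^k ‖x_i − x_{i−1}‖² ≤ 2 L D_X²/(k+1)`. -/
theorem stmt14 {E : Type*} [NormedAddCommGroup E] [NormedSpace ℝ E] [FiniteDimensional ℝ E]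
    (X : Set E) (hXcp : IsCompact X) (hXcv : Convex ℝ X) (hXne : X.Nonempty)
    (DX : ℝ) (hDX : IsGreatest {d : ℝ | ∃ a ∈ X, ∃ b ∈ X, d = ‖a - b‖} DX)
    (f : E → ℝ) (f' : E → E →L[ℝ] ℝ) (L : ℝ) (hL : 0 < L)
    (hconv : ConvexOn ℝ X f)
    (hder : ∀ a ∈ X, HasFDerivAt f (f' a) a)
    (hsmooth : ∀ a ∈ X, ∀ b ∈ X, f b ≤ f a + f' a (b - a) + L / 2 * ‖b - a‖ ^ 2)
    (x y z : ℕ → E) (γ : ℕ → ℝ) (hγ : ∀ k : ℕ, γ k = 2 / (k + 1))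
    (hx0 : x 0 ∈ X) (hy0 : y 0 = x 0)
    (hz : ∀ k ≥ 1, z (k - 1) =
      (((k : ℝ) - 1) / ((k : ℝ) + 1)) • y (k - 1) + (2 / ((k : ℝ) + 1)) • x (k - 1))
    (hxk : ∀ k ≥ 1, x k ∈ X ∧ ∀ v ∈ X, f' (z (k - 1)) (x k) ≤ f' (z (k - 1)) v)
    (hyk : ∀ k ≥ 1, y k ∈ X ∧ f (y k) ≤ f ((1 - γ k) • y (k - 1) + γ k • x k)) :
    ∀ k ≥ 1, ∀ u ∈ X,
      f (y k) - f u ≤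
        2 * L / (k * (k + 1)) * ∑ i ∈ Finset.Icc 1 k, ‖x i - x (i - 1)‖ ^ 2 ∧
      2 * L / (k * (k + 1)) * ∑ i ∈ Finset.Icc 1 k, ‖x i - x (i - 1)‖ ^ 2 ≤
        2 * L * DX ^ 2 / (k + 1) := by
  have hxX : ∀ i : ℕ, x i ∈ X := by
    intro i
    rcases Nat.eq_zero_or_pos i with h | h
    · simpa [h] using hx0
    · exact (hxk i h).1
  have hyX : ∀ i : ℕ, y i ∈ X := by
    intro i
    rcases Nat.eq_zero_or_pos i with h | h
    · simpa [h, hy0] using hx0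
    · exact (hyk i h).1
  -- per-step inequality, already multiplied through
  have step : ∀ k : ℕ, 1 ≤ k → ∀ u ∈ X,
      (k : ℝ) * ((k : ℝ) + 1) * (f (y k) - f u) ≤
        (k : ℝ) * ((k : ℝ) - 1) * (f (y (k - 1)) - f u) + 2 * L * ‖x k - x (k - 1)‖ ^ 2 := by
    intro k hk u hu
    obtain ⟨c, hc⟩ : ∃ c : ℝ, c = (k : ℝ) + 1 := ⟨_, rfl⟩
    have hc2 : (2 : ℝ) ≤ c := by
      have : (1 : ℝ) ≤ (k : ℝ) := by exact_mod_cast hk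
      linarith
    have hc0 : (0 : ℝ) < c := by linarith
    obtain ⟨g, hgdef⟩ : ∃ g : ℝ, g = γ k := ⟨_, rfl⟩
    have hg : g = 2 / c := by rw [hgdef, hγ, hc]
    have hcg : c * g = 2 := by rw [hg]; field_simp
    have hg0 : 0 ≤ g := by rw [hg]; positivity
    have hg1 : g ≤ 1 := by rw [hg, div_le_one hc0]; linarith
    have hzX : z (k - 1) ∈ X := by
      rw [hz k hk]
      have hco : ((k : ℝ) - 1) / ((k : ℝ) + 1) + 2 / ((k : ℝ) + 1) = 1 := by
        have h0 : ((k:ℝ) + 1) ≠ 0 := by positivity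
        field_simp
        ring
      exact hXcv (hyX (k - 1)) (hxX (k - 1))
        (by
          apply div_nonneg _ (by positivity)
          have : (1 : ℝ) ≤ (k : ℝ) := by exact_mod_cast hk
          linarith)
        (by positivity) hco
    have hzeq : z (k - 1) = (1 - g) • y (k - 1) + g • x (k - 1) := by
      have hco1 : ((k : ℝ) - 1) / ((k : ℝ) + 1) = 1 - g := by
        rw [hg, hc]
        have h0 : ((k:ℝ) + 1) ≠ 0 := by positivity
        field_simp
        ring
      have hco2 : 2 / ((k : ℝ) + 1) = g := by rw [hg, hc]
      rw [hz k hk, hco1, hco2]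
    have hyhatX : (1 - g) • y (k - 1) + g • x k ∈ X :=
      hXcv (hyX (k - 1)) (hxX k) (by linarith) hg0 (by ring)
    obtain ⟨w, hw⟩ : ∃ w : E, w = (1 - g) • y (k - 1) + g • x k := ⟨_, rfl⟩
    rw [← hw] at hyhatX
    have hdiff : w - z (k - 1) = g • (x k - x (k - 1)) := by
      rw [hzeq, hw]; module
    have hsm : f w ≤ f (z (k - 1)) + f' (z (k - 1)) (w - z (k - 1))
        + L / 2 * ‖w - z (k - 1)‖ ^ 2 := hsmooth _ hzX _ hyhatX
    obtain ⟨d, hd⟩ : ∃ d : ℝ, d = ‖x k - x (k - 1)‖ ^ 2 := ⟨_, rfl⟩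
    have hd0 : 0 ≤ d := by rw [hd]; positivity
    have hnorm : ‖w - z (k - 1)‖ ^ 2 = g ^ 2 * d := by
      rw [hdiff, norm_smul, Real.norm_eq_abs, abs_of_nonneg hg0, mul_pow, hd]
    have hlin : f (z (k - 1)) + f' (z (k - 1)) (w - z (k - 1)) =
        (1 - g) * (f (z (k - 1)) + f' (z (k - 1)) (y (k - 1) - z (k - 1)))
          + g * (f (z (k - 1)) + f' (z (k - 1)) (x k - z (k - 1))) := by
      have harg : w - z (k - 1) =
          (1 - g) • (y (k - 1) - z (k - 1)) + g • (x k - z (k - 1)) := by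
        rw [hw, hzeq]; module
      rw [harg, map_add, map_smul, map_smul]
      simp only [smul_eq_mul]
      ring
    have hconv1 : f (z (k - 1)) + f' (z (k - 1)) (y (k - 1) - z (k - 1)) ≤ f (y (k - 1)) :=
      grad_ineq_aux hconv hzX (hyX (k - 1)) (hder _ hzX)
    have hconv2 : f (z (k - 1)) + f' (z (k - 1)) (x k - z (k - 1)) ≤ f u := by
      have hopt : f' (z (k - 1)) (x k) ≤ f' (z (k - 1)) u := (hxk k hk).2 u hu
      have h2 : f (z (k - 1)) + f' (z (k - 1)) (u - z (k - 1)) ≤ f u :=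
        grad_ineq_aux hconv hzX hu (hder _ hzX)
      have : f' (z (k - 1)) (x k - z (k - 1)) ≤ f' (z (k - 1)) (u - z (k - 1)) := by
        rw [map_sub, map_sub]; linarith
      linarith
    have hy_le : f (y k) ≤ f w := by
      rw [hw, hgdef]
      exact (hyk k hk).2
    have hkey : f (y k) - f u ≤ (1 - g) * (f (y (k - 1)) - f u) + L / 2 * g ^ 2 * d := by
      rw [hnorm] at hsm
      nlinarith [mul_le_mul_of_nonneg_left hconv1 (by linarith : (0:ℝ) ≤ 1 - g),
        mul_le_mul_of_nonneg_left hconv2 hg0]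
    have hck : (k : ℝ) = c - 1 := by rw [hc]; ring
    have hnn : (0:ℝ) ≤ (c - 1) * c := by nlinarith
    have hmul : (c - 1) * c * (f (y k) - f u) ≤
        (c - 1) * c * ((1 - g) * (f (y (k - 1)) - f u) + L / 2 * g ^ 2 * d) :=
      mul_le_mul_of_nonneg_left hkey hnn
    have e1 : (c - 1) * c * ((1 - g) * (f (y (k - 1)) - f u) + L / 2 * g ^ 2 * d) =
        (c - 1) * (c * (1 - g)) * (f (y (k - 1)) - f u)
          + L / 2 * ((c * g) * g) * d * (c - 1) := by ring
    have hc1g : c * (1 - g) = c - 2 := by rw [mul_sub, hcg]; ring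
    rw [e1, hc1g, hcg] at hmul
    have e2 : L / 2 * (2 * g) * d * (c - 1) = L * ((c * g) * d) - L * (g * d) := by ring
    rw [e2, hcg] at hmul
    have e3 : L * (2 * d) - L * (g * d) ≤ 2 * L * d := by
      nlinarith [mul_nonneg (mul_nonneg hL.le hg0) hd0]
    have hgoal : (k : ℝ) * ((k : ℝ) + 1) * (f (y k) - f u) = (c - 1) * c * (f (y k) - f u) := by
      rw [hck, hc]; ring
    have hgoal2 : (k : ℝ) * ((k : ℝ) - 1) * (f (y (k - 1)) - f u) =
        (c - 1) * (c - 2) * (f (y (k - 1)) - f u) := by rw [hck]; ring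
    rw [hgoal, hgoal2, ← hd]
    linarith [hmul, e3]
  -- main inductive bound
  have key : ∀ k : ℕ, 1 ≤ k → ∀ u ∈ X,
      (k : ℝ) * ((k : ℝ) + 1) * (f (y k) - f u) ≤
        2 * L * ∑ i ∈ Finset.Icc 1 k, ‖x i - x (i - 1)‖ ^ 2 := by
    intro k hk
    induction k, hk using Nat.le_induction with
    | base =>
      intro u hu
      have := step 1 le_rfl u hu
      simpa using this
    | succ n hn ih =>
      intro u hu
      have hstep := step (n + 1) (by omega) u hu
      have hsum : ∑ i ∈ Finset.Icc 1 (n + 1), ‖x i - x (i - 1)‖ ^ 2 =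
          (∑ i ∈ Finset.Icc 1 n, ‖x i - x (i - 1)‖ ^ 2) + ‖x (n + 1) - x n‖ ^ 2 := by
        rw [Finset.sum_Icc_succ_top (by omega : 1 ≤ n + 1)]
        simp
      have hih := ih u hu
      have hcast : ((n + 1 : ℕ) : ℝ) = (n : ℝ) + 1 := by push_cast; ring
      rw [hsum]
      have hd0 : (0:ℝ) ≤ ‖x (n + 1) - x n‖ ^ 2 := by positivity
      have hstep' : ((n:ℝ) + 1) * ((n:ℝ) + 2) * (f (y (n + 1)) - f u) ≤
          ((n:ℝ) + 1) * (n:ℝ) * (f (y n) - f u) + 2 * L * ‖x (n + 1) - x n‖ ^ 2 := by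
        have : (n + 1) - 1 = n := by omega
        rw [this] at hstep
        push_cast at hstep
        nlinarith [hstep]
      push_cast
      nlinarith [hih, hstep']
  -- bounds on distances
  obtain ⟨p, hp⟩ := hXne
  have hDX0 : 0 ≤ DX := by
    have : (0:ℝ) ∈ {d : ℝ | ∃ a ∈ X, ∃ b ∈ X, d = ‖a - b‖} := ⟨p, hp, p, hp, by simp⟩
    exact hDX.2 this
  have hdist : ∀ i : ℕ, ‖x i - x (i - 1)‖ ^ 2 ≤ DX ^ 2 := by
    intro i
    have h1 : ‖x i - x (i - 1)‖ ≤ DX := hDX.2 ⟨x i, hxX i, x (i - 1), hxX (i - 1), rfl⟩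
    have h2 : 0 ≤ ‖x i - x (i - 1)‖ := norm_nonneg _
    nlinarith
  -- conclude
  intro k hk u hu
  have hk1 : (1:ℝ) ≤ (k:ℝ) := by exact_mod_cast hk
  have hP : (0:ℝ) < (k:ℝ) * ((k:ℝ) + 1) := by nlinarith
  have hkey := key k hk u hu
  set S : ℝ := ∑ i ∈ Finset.Icc 1 k, ‖x i - x (i - 1)‖ ^ 2 with hS
  have hS0 : 0 ≤ S := Finset.sum_nonneg fun i _ => by positivity
  constructor
  · rw [div_mul_eq_mul_div, le_div_iff₀ hP]
    nlinarith
  · have hSle : S ≤ (k:ℝ) * DX ^ 2 := by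
      calc S ≤ ∑ _i ∈ Finset.Icc 1 k, DX ^ 2 :=
          Finset.sum_le_sum fun i _ => hdist i
        _ = (k:ℝ) * DX ^ 2 := by
          rw [Finset.sum_const, Nat.card_Icc]
          simp [nsmul_eq_mul]
    have hcoef : 0 ≤ 2 * L / ((k:ℝ) * ((k:ℝ) + 1)) := by positivity
    calc 2 * L / ((k:ℝ) * ((k:ℝ) + 1)) * S
        ≤ 2 * L / ((k:ℝ) * ((k:ℝ) + 1)) * ((k:ℝ) * DX ^ 2) :=
          mul_le_mul_of_nonneg_left hSle hcoef
      _ = 2 * L * DX ^ 2 / ((k:ℝ) + 1) := by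
          field_simp
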